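/- For fixed integers r > k ≥ 2, limsup_{n→∞} f_r(n, 3r-2k, 3)/n^k ≤ 1/(k!·C(r,k) - k!/2). -/

import Mathlib

open Finset Filter

/-- `sparseTuranNumber n r v e` is `f_r(n,v,e)`. -/
noncomputable def sparseTuranNumber (n r v e : ℕ) : ℕ :=
  sSup {m | ∃ H : Finset (Finset (Fin n)),
    (∀ A ∈ H, A.card = r) ∧
    (∀ S ⊆ H, S.card = e → v + 1 ≤ (S.sup id).card) ∧
    H.card = m}

section Comb

variable {n r k : ℕ}

/-- Central structural lemma: for three distinct edges of a valid family,
`|A∩B| + |A∩C| ≤ 2k - 1`. -/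
lemma triple_bound (hk : 2 ≤ k) (hrk : k < r) {H : Finset (Finset (Fin n))}
    (hcard : ∀ A ∈ H, A.card = r)
    (hP : ∀ S ⊆ H, S.card = 3 → 3 * r - 2 * k + 1 ≤ (S.sup id).card)
    {A B C : Finset (Fin n)} (hA : A ∈ H) (hB : B ∈ H) (hC : C ∈ H)
    (hAB : A ≠ B) (hAC : A ≠ C) (hBC : B ≠ C) :
    (A ∩ B).card + (A ∩ C).card ≤ 2 * k - 1 := by
  have hS : ({A, B, C} : Finset (Finset (Fin n))) ⊆ H := by
    intro x hx; simp only [mem_insert, mem_singleton] at hx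
    rcases hx with rfl | rfl | rfl <;> assumption
  have hS3 : ({A, B, C} : Finset (Finset (Fin n))).card = 3 :=
    Finset.card_eq_three.mpr ⟨A, B, C, hAB, hAC, hBC, rfl⟩
  have hsup : ({A, B, C} : Finset (Finset (Fin n))).sup id = A ∪ (B ∪ C) := by
    simp [Finset.sup_insert, Finset.sup_singleton]
  have hlow := hP _ hS hS3
  rw [hsup] at hlow
  have hsub : A ∪ (B ∪ C) ⊆ (A ∪ (B \ A)) ∪ (C \ A) := by
    intro x hx
    simp only [mem_union, Finset.mem_sdiff] at hx ⊢
    tauto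
  have hub : (A ∪ (B ∪ C)).card ≤ A.card + (B \ A).card + (C \ A).card :=
    le_trans (card_le_card hsub)
      (le_trans (card_union_le _ _) (by gcongr; exact card_union_le _ _))
  have e1 : (B \ A).card + (B ∩ A).card = B.card := card_sdiff_add_card_inter B A
  have e2 : (C \ A).card + (C ∩ A).card = C.card := card_sdiff_add_card_inter C A
  rw [inter_comm A B, inter_comm A C]
  have hcA := hcard A hA; have hcB := hcard B hB; have hcC := hcard C hC
  omega

end Comb

section Comb2

variable {n r k : ℕ}

/-- Every `k`-set is in at most 2 edges. -/
lemma deg_le_two (hk : 2 ≤ k) (hrk : k < r) {H : Finset (Finset (Fin n))}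
    (hcard : ∀ A ∈ H, A.card = r)
    (hP : ∀ S ⊆ H, S.card = 3 → 3 * r - 2 * k + 1 ≤ (S.sup id).card)
    {K : Finset (Fin n)} (hK : K.card = k) :
    (H.filter (fun A => K ⊆ A)).card ≤ 2 := by
  by_contra hlt
  push_neg at hlt
  obtain ⟨A, B, C, hA, hB, hC, hAB, hAC, hBC⟩ := Finset.two_lt_card_iff.mp hlt
  simp only [mem_filter] at hA hB hC
  have h1 : k ≤ (A ∩ B).card := hK ▸ card_le_card (subset_inter hA.2 hB.2)
  have h2 : k ≤ (A ∩ C).card := hK ▸ card_le_card (subset_inter hA.2 hC.2)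
  have := triple_bound hk hrk hcard hP hA.1 hB.1 hC.1 hAB hAC hBC
  omega

/-- The bad edges: those intersecting another edge in at least `k+1` vertices. -/
def badSet (k : ℕ) (H : Finset (Finset (Fin n))) : Finset (Finset (Fin n)) :=
  H.filter (fun A => ∃ B ∈ H, B ≠ A ∧ k + 1 ≤ (A ∩ B).card)

/-- Every `(k-1)`-set is in at most 2 bad edges. -/
lemma bad_deg_le_two (hk : 2 ≤ k) (hrk : k < r) {H : Finset (Finset (Fin n))}
    (hcard : ∀ A ∈ H, A.card = r)
    (hP : ∀ S ⊆ H, S.card = 3 → 3 * r - 2 * k + 1 ≤ (S.sup id).card)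
    {K : Finset (Fin n)} (hK : K.card = k - 1) :
    ((badSet k H).filter (fun A => K ⊆ A)).card ≤ 2 := by
  by_contra hlt
  push_neg at hlt
  obtain ⟨A1, A2, A3, h1, h2, h3, h12, h13, h23⟩ := Finset.two_lt_card_iff.mp hlt
  simp only [mem_filter, badSet] at h1 h2 h3
  obtain ⟨⟨hA1, B, hB, hBA1, hBig⟩, hK1⟩ := h1
  obtain ⟨⟨hA2, _⟩, hK2⟩ := h2
  obtain ⟨⟨hA3, _⟩, hK3⟩ := h3
  -- pick C ∈ {A2, A3} with C ≠ B
  obtain ⟨C, hC, hCA1, hKC⟩ : ∃ C, C ∈ H ∧ C ≠ A1 ∧ K ⊆ A1 ∩ C ∧ C ≠ B := by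
    by_cases hb : A2 = B
    · exact ⟨A3, hA3, Ne.symm h13, subset_inter hK1 hK3, by rw [← hb]; exact (Ne.symm h23)⟩
    · exact ⟨A2, hA2, Ne.symm h12, subset_inter hK1 hK2, hb⟩
  obtain ⟨hKsub, hCB⟩ := hKC
  have htb := triple_bound hk hrk hcard hP hA1 hB hC (Ne.symm hBA1) (Ne.symm hCA1)
    (Ne.symm hCB)
  have hcK : k - 1 ≤ (A1 ∩ C).card := hK ▸ card_le_card hKsub
  omega

/-- Double counting incidences between `j`-sets and edges of a family. -/
lemma swap_count (F T : Finset (Finset (Fin n))) :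
    ∑ K ∈ T, (F.filter (fun A => K ⊆ A)).card
      = ∑ A ∈ F, (T.filter (fun K => K ⊆ A)).card := by
  simp only [Finset.card_filter]
  exact Finset.sum_comm

lemma count_eq (F : Finset (Finset (Fin n))) (j : ℕ) (hcard : ∀ A ∈ F, A.card = r) :
    ∑ K ∈ (univ : Finset (Fin n)).powersetCard j, (F.filter (fun A => K ⊆ A)).card
      = F.card * r.choose j := by
  rw [swap_count]
  have : ∀ A ∈ F, (((univ : Finset (Fin n)).powersetCard j).filter
      (fun K => K ⊆ A)).card = r.choose j := by
    intro A hA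
    have : ((univ : Finset (Fin n)).powersetCard j).filter (fun K => K ⊆ A)
        = A.powersetCard j := by
      ext K
      simp only [mem_filter, mem_powersetCard]
      exact ⟨fun ⟨⟨_, h2⟩, h3⟩ => ⟨h3, h2⟩, fun ⟨h1, h2⟩ => ⟨⟨subset_univ _, h2⟩, h1⟩⟩
    rw [this, card_powersetCard, hcard A hA]
  rw [Finset.sum_congr rfl this, Finset.sum_const, smul_eq_mul]

lemma double_count (F : Finset (Finset (Fin n))) (j d : ℕ) (hcard : ∀ A ∈ F, A.card = r)
    (hdeg : ∀ K : Finset (Fin n), K.card = j → (F.filter (fun A => K ⊆ A)).card ≤ d) :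
    F.card * r.choose j ≤ d * n.choose j := by
  rw [← count_eq F j hcard]
  calc ∑ K ∈ (univ : Finset (Fin n)).powersetCard j, (F.filter (fun A => K ⊆ A)).card
      ≤ ∑ _K ∈ (univ : Finset (Fin n)).powersetCard j, d := by
        refine Finset.sum_le_sum fun K hK => hdeg K ?_
        exact (Finset.mem_powersetCard.mp hK).2
    _ = d * n.choose j := by
        rw [Finset.sum_const, smul_eq_mul, card_powersetCard, card_univ, Fintype.card_fin,
          mul_comm]

end Comb2

section Main

variable {n r k : ℕ}

lemma main_bound (hk : 2 ≤ k) (hrk : k < r) {H : Finset (Finset (Fin n))}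
    (hcard : ∀ A ∈ H, A.card = r)
    (hP : ∀ S ⊆ H, S.card = 3 → 3 * r - 2 * k + 1 ≤ (S.sup id).card) :
    H.card * ((2 * r.choose k - 1) * r.choose (k - 1))
      ≤ 2 * n.choose k * r.choose (k - 1) + 2 * n.choose (k - 1) * r.choose k := by
  classical
  set c := r.choose k with hc
  set c' := r.choose (k - 1) with hc'
  have hc1 : 1 ≤ c := Nat.choose_pos hrk.le
  have hc'1 : 1 ≤ c' := Nat.choose_pos (by omega)
  set U := (univ : Finset (Fin n)).powersetCard k with hU
  set deg := fun K : Finset (Fin n) => (H.filter (fun A => K ⊆ A)).card with hdeg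
  set D2 := U.filter (fun K => deg K = 2) with hD2
  set Bad := badSet k H with hBad
  have hBadSub : Bad ⊆ H := filter_subset _ _
  -- Step 1+2 : m * c ≤ C(n,k) + |D2|
  have step12 : H.card * c ≤ n.choose k + D2.card := by
    have e1 : ∑ K ∈ U, deg K = H.card * c := count_eq H k hcard
    have e2 : ∑ K ∈ U, deg K ≤ ∑ K ∈ U, (1 + if deg K = 2 then 1 else 0) := by
      refine Finset.sum_le_sum fun K hK => ?_
      have h2 : deg K ≤ 2 := deg_le_two hk hrk hcard hP (Finset.mem_powersetCard.mp hK).2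
      by_cases h : deg K = 2
      · simp [h]
      · simp only [h, if_false]; omega
    rw [Finset.sum_add_distrib, Finset.sum_const, smul_eq_mul, mul_one,
      ← Finset.card_filter] at e2
    have hUcard : U.card = n.choose k := by
      rw [hU, card_powersetCard, card_univ, Fintype.card_fin]
    rw [e1, hUcard] at e2
    exact e2
  -- Step 3 : 2 * |D2| = ∑_{A ∈ H} |{K ∈ D2 : K ⊆ A}|
  have step3 : 2 * D2.card = ∑ A ∈ H, (D2.filter (fun K => K ⊆ A)).card := by
    rw [← swap_count]
    have : ∀ K ∈ D2, deg K = 2 := fun K hK => (Finset.mem_filter.mp hK).2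
    rw [Finset.sum_congr rfl this, Finset.sum_const, smul_eq_mul, mul_comm]
  -- Step 4 : good edges contain at most one D2-set
  have step4 : ∀ A ∈ H, A ∉ Bad → (D2.filter (fun K => K ⊆ A)).card ≤ 1 := by
    intro A hA hAg
    rw [Finset.card_le_one]
    have key : ∀ K ∈ D2.filter (fun K => K ⊆ A), ∃ B ∈ H, B ≠ A ∧ K = A ∩ B := by
      intro K hK
      rw [mem_filter, hD2, mem_filter] at hK
      obtain ⟨⟨hKU, hKdeg⟩, hKA⟩ := hK
      have hKk : K.card = k := (Finset.mem_powersetCard.mp hKU).2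
      have hAf : A ∈ H.filter (fun A => K ⊆ A) := mem_filter.mpr ⟨hA, hKA⟩
      have hlt1 : 1 < (H.filter (fun A => K ⊆ A)).card := by
        change 1 < deg K; omega
      obtain ⟨B, hBf, hBA⟩ := Finset.exists_mem_ne hlt1 A
      rw [mem_filter] at hBf
      refine ⟨B, hBf.1, hBA, ?_⟩
      have hsub : K ⊆ A ∩ B := subset_inter hKA hBf.2
      have hle : (A ∩ B).card ≤ k := by
        by_contra hgt
        exact hAg (mem_filter.mpr ⟨hA, B, hBf.1, hBA, by omega⟩)
      exact (Finset.eq_of_subset_of_card_le hsub (by omega))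
    intro K1 hK1 K2 hK2
    obtain ⟨B1, hB1, hB1A, e1⟩ := key K1 hK1
    obtain ⟨B2, hB2, hB2A, e2⟩ := key K2 hK2
    have hB12 : B1 = B2 := by
      by_contra hne
      have htb := triple_bound hk hrk hcard hP hA hB1 hB2 (Ne.symm hB1A) (Ne.symm hB2A) hne
      have hk1 : (K1 : Finset (Fin n)).card = k := by
        have := (Finset.mem_powersetCard.mp
          (Finset.mem_filter.mp ((Finset.mem_filter.mp hK1).1)).1).2
        exact this
      have hk2 : (K2 : Finset (Fin n)).card = k := by
        have := (Finset.mem_powersetCard.mp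
          (Finset.mem_filter.mp ((Finset.mem_filter.mp hK2).1)).1).2
        exact this
      rw [e1] at hk1; rw [e2] at hk2
      omega
    rw [e1, e2, hB12]
  -- Step 5 : any r-edge contains at most c many D2-sets
  have step5 : ∀ A ∈ H, (D2.filter (fun K => K ⊆ A)).card ≤ c := by
    intro A hA
    have hsub : D2.filter (fun K => K ⊆ A) ⊆ A.powersetCard k := by
      intro K hK
      rw [mem_filter] at hK
      rw [Finset.mem_powersetCard]
      exact ⟨hK.2, (Finset.mem_powersetCard.mp (Finset.mem_filter.mp hK.1).1).2⟩
    calc (D2.filter (fun K => K ⊆ A)).card ≤ (A.powersetCard k).card := card_le_card hsub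
      _ = c := by rw [card_powersetCard, hcard A hA]
  -- Step 6 : 2 * |D2| ≤ m + b * c
  have step6 : 2 * D2.card ≤ H.card + Bad.card * c := by
    rw [step3, ← Finset.sum_sdiff hBadSub]
    have h1 : ∑ A ∈ H \ Bad, (D2.filter (fun K => K ⊆ A)).card ≤ (H \ Bad).card := by
      calc ∑ A ∈ H \ Bad, (D2.filter (fun K => K ⊆ A)).card
          ≤ ∑ _A ∈ H \ Bad, 1 := Finset.sum_le_sum fun A hA =>
            step4 A (mem_sdiff.mp hA).1 (mem_sdiff.mp hA).2
        _ = (H \ Bad).card := by rw [Finset.sum_const, smul_eq_mul, mul_one]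
    have h2 : ∑ A ∈ Bad, (D2.filter (fun K => K ⊆ A)).card ≤ Bad.card * c := by
      calc ∑ A ∈ Bad, (D2.filter (fun K => K ⊆ A)).card
          ≤ ∑ _A ∈ Bad, c := Finset.sum_le_sum fun A hA => step5 A (hBadSub hA)
        _ = Bad.card * c := by rw [Finset.sum_const, smul_eq_mul]
    have h3 : (H \ Bad).card ≤ H.card := card_le_card (sdiff_subset)
    omega
  -- Step 7 : b * c' ≤ 2 * C(n, k-1)
  have step7 : Bad.card * c' ≤ 2 * n.choose (k - 1) :=
    double_count Bad (k - 1) 2 (fun A hA => hcard A (hBadSub hA))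
      (fun K hK => bad_deg_le_two hk hrk hcard hP hK)
  -- Combine
  have key : H.card * (2 * c * c') ≤ 2 * n.choose k * c' + 2 * n.choose (k - 1) * c
      + H.card * c' := by
    have h1 : H.card * (2 * c * c') = (H.card * c) * 2 * c' := by ring
    calc H.card * (2 * c * c') = (H.card * c) * 2 * c' := by ring
      _ ≤ (n.choose k + D2.card) * 2 * c' := by
          exact Nat.mul_le_mul_right _ (Nat.mul_le_mul_right _ step12)
      _ = 2 * n.choose k * c' + (2 * D2.card) * c' := by ring
      _ ≤ 2 * n.choose k * c' + (H.card + Bad.card * c) * c' :=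
          Nat.add_le_add_left (Nat.mul_le_mul_right _ step6) _
      _ = 2 * n.choose k * c' + (Bad.card * c') * c + H.card * c' := by ring
      _ ≤ 2 * n.choose k * c' + (2 * n.choose (k - 1)) * c + H.card * c' := by
          refine Nat.add_le_add_right (Nat.add_le_add_left (Nat.mul_le_mul_right _ step7) _) _
      _ = 2 * n.choose k * c' + 2 * n.choose (k - 1) * c + H.card * c' := by ring
  have expand : H.card * ((2 * c - 1) * c') + H.card * c' = H.card * (2 * c * c') := by
    have : (2 * c - 1) * c' + c' = 2 * c * c' := by
      have h1 : 2 * c - 1 + 1 = 2 * c := by omega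
      calc (2 * c - 1) * c' + c' = (2 * c - 1 + 1) * c' := by ring
        _ = 2 * c * c' := by rw [h1]
    calc H.card * ((2 * c - 1) * c') + H.card * c' = H.card * ((2 * c - 1) * c' + c') := by ring
      _ = H.card * (2 * c * c') := by rw [this]
  omega

end Main

/-- `sparseTuranNumber n r v e` is `f_r(n,v,e)`. -/

lemma sTN_le (r k : ℕ) (hk : 2 ≤ k) (hrk : k < r) (n : ℕ) :
    sparseTuranNumber n r (3 * r - 2 * k) 3 * ((2 * r.choose k - 1) * r.choose (k - 1))
      ≤ 2 * n.choose k * r.choose (k - 1) + 2 * n.choose (k - 1) * r.choose k := by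
  have hne : ({m | ∃ H : Finset (Finset (Fin n)),
      (∀ A ∈ H, A.card = r) ∧
      (∀ S ⊆ H, S.card = 3 → (3 * r - 2 * k) + 1 ≤ (S.sup id).card) ∧
      H.card = m} : Set ℕ).Nonempty := by
    refine ⟨0, ∅, by simp, ?_, rfl⟩
    intro S hS h3
    rw [Finset.subset_empty] at hS
    subst hS
    simp at h3
  have hbdd : BddAbove ({m | ∃ H : Finset (Finset (Fin n)),
      (∀ A ∈ H, A.card = r) ∧
      (∀ S ⊆ H, S.card = 3 → (3 * r - 2 * k) + 1 ≤ (S.sup id).card) ∧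
      H.card = m} : Set ℕ) := by
    refine ⟨2 ^ n, fun m hm => ?_⟩
    obtain ⟨H, -, -, rfl⟩ := hm
    calc H.card ≤ Fintype.card (Finset (Fin n)) := Finset.card_le_univ H
      _ = 2 ^ n := by rw [Fintype.card_finset, Fintype.card_fin]
  obtain ⟨H, hHc, hHP, hHm⟩ := Nat.sSup_mem hne hbdd
  have : sparseTuranNumber n r (3 * r - 2 * k) 3 = H.card := hHm.symm
  rw [this]
  exact main_bound hk hrk hHc hHP

set_option maxHeartbeats 2000000 in
/-- For fixed r > k ≥ 2,
`limsup f_r(n, 3r-2k, 3)/n^k ≤ 1/(k!·C(r,k) - k!/2)`. -/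
theorem limsup_upper_bound (r k : ℕ) (hk : 2 ≤ k) (hrk : k < r) :
    limsup (fun n : ℕ => (sparseTuranNumber n r (3 * r - 2 * k) 3 : ℝ) / n ^ k)
        atTop
      ≤ 1 / ((k.factorial : ℝ) * r.choose k - k.factorial / 2) := by
  obtain ⟨k', rfl⟩ : ∃ k', k = k' + 1 := ⟨k - 1, by omega⟩
  set c : ℕ := r.choose (k' + 1) with hc
  set c' : ℕ := r.choose k' with hc'
  have hc1 : 1 ≤ c := Nat.choose_pos (by omega)
  have hc'1 : 1 ≤ c' := Nat.choose_pos (by omega)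
  set D : ℕ := 2 * c - 1 with hD
  have hDR : (D : ℝ) = 2 * (c : ℝ) - 1 := by
    rw [hD, Nat.cast_sub (by omega : 1 ≤ 2 * c)]
    push_cast; ring
  have hD1 : 1 ≤ D := by omega
  set K! : ℝ := ((k' + 1).factorial : ℝ) with hKf
  have hK0 : (0 : ℝ) < K! := by positivity
  set L : ℝ := 1 / (K! * c - K! / 2) with hL
  set E : ℝ := 2 * c / ((D : ℝ) * c') with hE
  have hcR : (1 : ℝ) ≤ c := by exact_mod_cast hc1
  have hc'R : (1 : ℝ) ≤ c' := by exact_mod_cast hc'1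
  have hDRpos : (0 : ℝ) < D := by exact_mod_cast hD1
  have hdenL : (0 : ℝ) < K! * c - K! / 2 := by nlinarith
  -- eventual bound
  have hev : ∀ᶠ n in atTop,
      (sparseTuranNumber n r (3 * r - 2 * (k' + 1)) 3 : ℝ) / (n : ℝ) ^ (k' + 1)
        ≤ L + E / n := by
    filter_upwards [eventually_ge_atTop 1] with n hn
    have hnR : (1 : ℝ) ≤ (n : ℝ) := by exact_mod_cast hn
    have hn0 : (0 : ℝ) < (n : ℝ) := by linarith
    set F : ℝ := (sparseTuranNumber n r (3 * r - 2 * (k' + 1)) 3 : ℝ) with hF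
    have hF0 : 0 ≤ F := by positivity
    set A : ℝ := (n.choose (k' + 1) : ℝ) with hA
    set B : ℝ := (n.choose k' : ℝ) with hB
    set N1 : ℝ := (n : ℝ) ^ (k' + 1) with hN1
    set N0 : ℝ := (n : ℝ) ^ k' with hN0
    have hN1pos : 0 < N1 := by positivity
    have hN0pos : 0 < N0 := by positivity
    have hN1eq : N1 = N0 * n := by rw [hN1, hN0, pow_succ]
    have hnat := sTN_le r (k' + 1) hk hrk n
    simp only [Nat.add_sub_cancel] at hnat
    have hR : F * ((D : ℝ) * c') ≤ 2 * A * c' + 2 * B * c := by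
      rw [hF, hA, hB]
      exact_mod_cast hnat
    have hch1 : K! * A ≤ N1 := by
      rw [hKf, hA, hN1]
      exact_mod_cast (Nat.descFactorial_eq_factorial_mul_choose n (k' + 1)) ▸
        Nat.descFactorial_le_pow n (k' + 1)
    have hch2 : B ≤ N0 := by
      rw [hB, hN0]
      have h := Nat.descFactorial_le_pow n k'
      rw [Nat.descFactorial_eq_factorial_mul_choose] at h
      exact_mod_cast le_trans (Nat.le_mul_of_pos_left (n.choose k') (Nat.factorial_pos k')) h
    have hA' : A ≤ N1 / K! := by rw [le_div_iff₀ hK0]; nlinarith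
    calc F / N1 ≤ (2 * A * c' + 2 * B * c) / (((D : ℝ) * c') * N1) := by
          rw [div_le_div_iff₀ hN1pos (by positivity)]
          nlinarith [mul_le_mul_of_nonneg_right hR (le_of_lt hN1pos)]
      _ ≤ (2 * (N1 / K!) * c' + 2 * N0 * c) / (((D : ℝ) * c') * N1) := by
          gcongr
      _ = L + E / n := by
          have hL2 : L = 2 / (K! * (2 * (c : ℝ) - 1)) := by
            rw [hL, div_eq_div_iff (ne_of_gt hdenL) (by nlinarith)]; ring
          rw [hL2, hE, hDR, hN1eq]
          have hc'0 : (c' : ℝ) ≠ 0 := by positivity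
          have hD0 : 2 * (c : ℝ) - 1 ≠ 0 := by nlinarith
          have hN00 : N0 ≠ 0 := ne_of_gt hN0pos
          have hn0' : (n : ℝ) ≠ 0 := ne_of_gt hn0
          have hK0' : K! ≠ 0 := ne_of_gt hK0
          have hdenL' : K! * c - K! / 2 ≠ 0 := ne_of_gt hdenL
          field_simp
  have htend : Tendsto (fun n : ℕ => L + E / n) atTop (nhds L) := by
    have h0 := tendsto_const_div_atTop_nhds_zero_nat E
    simpa using tendsto_const_nhds.add h0
  have hcob : IsCoboundedUnder (· ≤ ·) atTop
      (fun n : ℕ => (sparseTuranNumber n r (3 * r - 2 * (k' + 1)) 3 : ℝ) / n ^ (k' + 1)) :=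
    isCoboundedUnder_le_of_le atTop (x := 0) (fun n => by positivity)
  calc limsup (fun n : ℕ =>
        (sparseTuranNumber n r (3 * r - 2 * (k' + 1)) 3 : ℝ) / n ^ (k' + 1)) atTop
      ≤ limsup (fun n : ℕ => L + E / n) atTop :=
        limsup_le_limsup hev hcob htend.isBoundedUnder_le
    _ = L := htend.limsup_eq
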